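/- Fix an integer λ ≥ 3 and a real ε > 0, and consider the 2NC-TAP instance with V = {1, …, λ+1}, spanning tree T the path with edges {k, k+1} for k ∈ [λ] (cost 0), links ℓ_k = {k, k+2} with cost(ℓ_k) = 1/k for k ∈ [λ−1], and link ℓ̃ = {1, λ+1} with cost(ℓ̃) = 1+ε. Then: (a) T ∪ {ℓ̃} is 2-node-connected, so the minimum cost of a feasible 2NC-TAP solution is at most 1+ε; and (b) every greedy run on this instance picks exactly the links ℓ_{λ−1}, ℓ_{λ−2}, …, ℓ_1 in this order, with total cost H(λ−1). Hence the greedy algorithm returns a solution of cost H(λ−1) while the optimum is at most 1+ε. -/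

import Mathlib

open scoped Classical
open Finset
open Fin.NatCast

namespace TwoNCTAP

variable {V : Type*}

/-- The graph `H` with the vertex `u` "deleted": all edges incident to `u` are removed,
so that `u` becomes an isolated vertex. -/
def delVert (H : SimpleGraph V) (u : V) : SimpleGraph V where
  Adj a b := H.Adj a b ∧ a ≠ u ∧ b ≠ u
  symm := ⟨by rintro a b ⟨h, ha, hb⟩; exact ⟨h.symm, hb, ha⟩⟩
  loopless := ⟨by rintro a ⟨h, -, -⟩; exact H.irrefl h⟩

/-- The partition of `V ∖ {u}` into the vertex sets of the connected components of `H − u`. -/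
def compPartition (H : SimpleGraph V) (u : V) : Set (Set V) :=
  {S | ∃ v, v ≠ u ∧ S = {w | (delVert H u).Reachable v w}}

/-- `P` is a partition of the set `S`. -/
def IsPartitionOf (P : Set (Set V)) (S : Set V) : Prop :=
  (∀ B ∈ P, B.Nonempty) ∧ (∀ B ∈ P, B ⊆ S) ∧ ∀ v ∈ S, ∃! B : Set V, B ∈ P ∧ v ∈ B

/-- `P ∈ Ptn⊇(comps(T−u))`: `P` is a partition of `V ∖ {u}` each of whose blocks is a
union of vertex sets of connected components of `T − u`. -/
def PtnSup (T : SimpleGraph V) (u : V) (P : Set (Set V)) : Prop :=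
  IsPartitionOf P {v | v ≠ u} ∧ ∀ B ∈ compPartition T u, ∃ C ∈ P, B ⊆ C

/-- An edge `e` crosses the partition `P` if its two endpoints lie in different blocks of `P`. -/
def Crosses (P : Set (Set V)) (e : Sym2 V) : Prop :=
  ∃ v w, e = s(v, w) ∧ ∃ B ∈ P, ∃ C ∈ P, B ≠ C ∧ v ∈ B ∧ w ∈ C

/-- `u` is a non-leaf node of `T`. -/
def NonLeaf (T : SimpleGraph V) (u : V) : Prop := 1 < (T.neighborSet u).ncard

/-- The links of the instance: the edges of `G` that are not edges of the tree `T`. -/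
def links (G T : SimpleGraph V) : Set (Sym2 V) := G.edgeSet \ T.edgeSet

variable [Fintype V]

/-- Feasibility for the partition LP (P) of the 2NC-TAP instance `(G, T, cost)`. -/
def FeasibleP (G T : SimpleGraph V) (x : Sym2 V → ℝ) : Prop :=
  (∀ ℓ ∈ links G T, 0 ≤ x ℓ) ∧
  ∀ u : V, NonLeaf T u → ∀ P : Set (Set V), PtnSup T u P →
    (P.ncard : ℝ) - 1 ≤
      ∑ ℓ ∈ Finset.univ.filter (fun ℓ : Sym2 V => ℓ ∈ links G T ∧ Crosses P ℓ), x ℓ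


/-- The tree `T` together with a set `F` of links added as edges. -/
def withLinks (T : SimpleGraph V) (F : Set (Sym2 V)) : SimpleGraph V :=
  T ⊔ SimpleGraph.fromEdgeSet F

/-- The current partition `𝒫^i_u` (0-indexed): the partition of `V ∖ {u}` into the vertex
sets of the connected components of `(T ∪ {ℓ_0, …, ℓ_{i−1}}) − u`. -/
def curPtn {m : ℕ} (T : SimpleGraph V) (ℓseq : Fin m → Sym2 V) (i : ℕ) (u : V) :
    Set (Set V) :=
  compPartition (withLinks T {e | ∃ j : Fin m, (j : ℕ) < i ∧ ℓseq j = e}) u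

/-- `inc^i(e)`: the set of non-leaf nodes `u` of `T` whose current partition (at the start
of iteration `i`, 0-indexed) is crossed by the link `e`. -/
def incSet {m : ℕ} (T : SimpleGraph V) (ℓseq : Fin m → Sym2 V) (i : ℕ)
    (e : Sym2 V) : Set V :=
  {u | NonLeaf T u ∧ Crosses (curPtn T ℓseq i u) e}

/-- A greedy run on the 2NC-TAP instance `(G, T, cost)`: a sequence of distinct links
`ℓ_0, …, ℓ_{m−1}` such that each `ℓ_i` minimizes the cost-coverage ratio at iteration `i`,
and at the end every current partition is trivial (i.e. `T` plus the picked links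
is 2-node-connected). -/
def IsGreedyRun (G T : SimpleGraph V) (cost : Sym2 V → ℝ) (m : ℕ)
    (ℓseq : Fin m → Sym2 V) : Prop :=
  Function.Injective ℓseq ∧
  (∀ i, ℓseq i ∈ links G T) ∧
  (∀ i : Fin m,
    (incSet T ℓseq (i : ℕ) (ℓseq i)).Nonempty ∧
    ∀ e ∈ links G T, (incSet T ℓseq (i : ℕ) e).Nonempty →
      cost (ℓseq i) / ((incSet T ℓseq (i : ℕ) (ℓseq i)).ncard : ℝ)
        ≤ cost e / ((incSet T ℓseq (i : ℕ) e).ncard : ℝ)) ∧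
  ∀ u : V, NonLeaf T u → curPtn T ℓseq m u = {{v | v ≠ u}}

/-- `ν(u)`: the number of connected components of `T − u`. -/
noncomputable def nblocks (T : SimpleGraph V) (u : V) : ℕ := (compPartition T u).ncard


/-- The `k`-th harmonic number `H(k) = 1 + 1/2 + ⋯ + 1/k`. -/
noncomputable def harm (k : ℕ) : ℝ := ∑ i ∈ Finset.range k, (1 : ℝ) / (i + 1)

/-- `H` is 2-node-connected: it has at least 3 nodes, is connected, and deleting any
single node leaves a connected graph. -/
def TwoNodeConnected {W : Type*} [Fintype W] (H : SimpleGraph W) : Prop :=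
  3 ≤ Fintype.card W ∧ H.Connected ∧
    ∀ u v w : W, v ≠ u → w ≠ u → (delVert H u).Reachable v w

/-- The path graph on `Fin n`, with edges `{k, k+1}`. -/
def pathG (n : ℕ) : SimpleGraph (Fin n) :=
  SimpleGraph.fromRel (fun i j => (i : ℕ) + 1 = (j : ℕ))

lemma reach_stay (H : SimpleGraph V) (S : Set V)
    (h : ∀ a b, H.Adj a b → (a ∈ S ↔ b ∈ S)) {v w : V} (hr : H.Reachable v w) :
    (v ∈ S ↔ w ∈ S) := by
  obtain ⟨p⟩ := hr
  induction p with
  | nil => rfl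
  | cons hadj _ ih => exact (h _ _ hadj).trans ih

lemma delVert_reach_ne (H : SimpleGraph V) (u : V) {v : V}
    (h : (delVert H u).Reachable v u) : v = u := by
  have h2 : ∀ a b, (delVert H u).Adj a b → (a ∈ {x | x = u} ↔ b ∈ {x | x = u}) := by
    rintro a b ⟨-, ha, hb⟩; simp [ha, hb]
  simpa using (reach_stay _ _ h2 h)

lemma reach_class_eq (H : SimpleGraph V) {b c : V} (h : H.Reachable b c) :
    {x | H.Reachable b x} = {x | H.Reachable c x} := by
  ext x; exact ⟨fun hx => h.symm.trans hx, fun hx => h.trans hx⟩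

lemma crosses_compPartition_iff (H : SimpleGraph V) (u v w : V) :
    Crosses (compPartition H u) s(v, w) ↔
      v ≠ u ∧ w ≠ u ∧ ¬ (delVert H u).Reachable v w := by
  constructor
  · rintro ⟨v', w', hs, B, ⟨b, hb, rfl⟩, C, ⟨c, hc, rfl⟩, hBC, hv, hw⟩
    have key : ∀ x y : V, (delVert H u).Reachable b x → (delVert H u).Reachable c y →
        x ≠ u ∧ y ≠ u ∧ ¬ (delVert H u).Reachable x y := by
      intro x y hx hy
      refine ⟨?_, ?_, ?_⟩
      · intro hxu; exact hb (delVert_reach_ne H u (hxu ▸ hx))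
      · intro hyu; exact hc (delVert_reach_ne H u (hyu ▸ hy))
      · intro hxy; exact hBC (reach_class_eq _ (hx.trans (hxy.trans hy.symm)))
    rw [Sym2.eq_iff] at hs
    rcases hs with ⟨rfl, rfl⟩ | ⟨rfl, rfl⟩
    · exact key v w hv hw
    · obtain ⟨h1, h2, h3⟩ := key w v hv hw
      exact ⟨h2, h1, fun hr => h3 hr.symm⟩
  · rintro ⟨hv, hw, hr⟩
    refine ⟨v, w, rfl, {x | (delVert H u).Reachable v x}, ⟨v, hv, rfl⟩,
      {x | (delVert H u).Reachable w x}, ⟨w, hw, rfl⟩, ?_,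
      SimpleGraph.Reachable.refl v, SimpleGraph.Reachable.refl w⟩
    intro hEq
    have : w ∈ {x | (delVert H u).Reachable v x} := by
      rw [hEq]; exact SimpleGraph.Reachable.refl w
    exact hr this

lemma reach_seg {n : ℕ} (H : SimpleGraph (Fin n)) (u : Fin n)
    (hpath : ∀ a b : Fin n, (a : ℕ) + 1 = (b : ℕ) → H.Adj a b) :
    ∀ (k : ℕ) (v w : Fin n), (w : ℕ) - (v : ℕ) = k → (v : ℕ) ≤ (w : ℕ) →
      (∀ x : Fin n, (v : ℕ) ≤ (x : ℕ) → (x : ℕ) ≤ (w : ℕ) → x ≠ u) →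
      (delVert H u).Reachable v w := by
  intro k
  induction k with
  | zero =>
    intro v w h1 h2 _
    have : v = w := Fin.ext (by omega)
    subst this; rfl
  | succ k ih =>
    intro v w h1 h2 hx
    have hvw : (v : ℕ) < (w : ℕ) := by omega
    have hlt : (v : ℕ) + 1 < n := lt_of_le_of_lt hvw w.isLt
    set v' : Fin n := ⟨(v : ℕ) + 1, hlt⟩ with hv'
    have hv'val : (v' : ℕ) = (v : ℕ) + 1 := rfl
    have hadj : (delVert H u).Adj v v' :=
      ⟨hpath v v' rfl, hx v le_rfl (by omega), hx v' (by omega) (by omega)⟩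
    exact hadj.reachable.trans (ih v' w (by omega) (by omega)
      (fun x hx1 hx2 => hx x (by omega) hx2))

lemma reach_seg' {n : ℕ} (H : SimpleGraph (Fin n)) (u : Fin n)
    (hpath : ∀ a b : Fin n, (a : ℕ) + 1 = (b : ℕ) → H.Adj a b)
    (v w : Fin n)
    (hx : ∀ x : Fin n, min (v : ℕ) (w : ℕ) ≤ (x : ℕ) → (x : ℕ) ≤ max (v : ℕ) (w : ℕ) → x ≠ u) :
    (delVert H u).Reachable v w := by
  rcases le_total (v : ℕ) (w : ℕ) with h | h
  · exact reach_seg H u hpath _ v w rfl h (fun x h1 h2 => hx x (by omega) (by omega))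
  · exact (reach_seg H u hpath _ w v rfl h (fun x h1 h2 => hx x (by omega) (by omega))).symm


def Ei (lam j : ℕ) : Sym2 (Fin (lam + 1)) :=
  s(((lam - 2 - j : ℕ) : Fin (lam + 1)), ((lam - j : ℕ) : Fin (lam + 1)))

def Fstep (lam i : ℕ) : Set (Sym2 (Fin (lam + 1))) := {e | ∃ j : ℕ, j < i ∧ Ei lam j = e}

omit [Fintype V] in
lemma withLinks_adj (T : SimpleGraph V) (F : Set (Sym2 V)) (a b : V) :
    (withLinks T F).Adj a b ↔ T.Adj a b ∨ (s(a, b) ∈ F ∧ a ≠ b) := by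
  simp [withLinks, SimpleGraph.fromEdgeSet_adj]

lemma pathG_adj (n : ℕ) (a b : Fin n) :
    (pathG n).Adj a b ↔ a ≠ b ∧ ((a : ℕ) + 1 = (b : ℕ) ∨ (b : ℕ) + 1 = (a : ℕ)) := by
  simp [pathG, SimpleGraph.fromRel_adj]

lemma path_hpath (lam : ℕ) (F : Set (Sym2 (Fin (lam + 1)))) :
    ∀ a b : Fin (lam + 1), (a : ℕ) + 1 = (b : ℕ) →
      (withLinks (pathG (lam + 1)) F).Adj a b := by
  intro a b h
  rw [withLinks_adj, pathG_adj]
  exact Or.inl ⟨fun he => by rw [he] at h; omega, Or.inl h⟩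

lemma step_sep (lam i : ℕ) (hi : i ≤ lam - 1) (u : Fin (lam + 1))
    (hu : (u : ℕ) ≤ lam - 1 - i) :
    ∀ a b, (delVert (withLinks (pathG (lam + 1)) (Fstep lam i)) u).Adj a b →
      ((a : ℕ) < (u : ℕ) ↔ (b : ℕ) < (u : ℕ)) := by
  rintro a b ⟨hab, ha, hb⟩
  have ha' : (a : ℕ) ≠ (u : ℕ) := fun h => ha (Fin.ext h)
  have hb' : (b : ℕ) ≠ (u : ℕ) := fun h => hb (Fin.ext h)
  rw [withLinks_adj, pathG_adj] at hab
  rcases hab with ⟨-, h | h⟩ | ⟨⟨j, hj, hEe⟩, -⟩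
  · omega
  · omega
  · have h1 : (((lam - 2 - j : ℕ) : Fin (lam + 1)) : ℕ) = lam - 2 - j :=
      Fin.val_cast_of_lt (by omega)
    have h2 : (((lam - j : ℕ) : Fin (lam + 1)) : ℕ) = lam - j :=
      Fin.val_cast_of_lt (by omega)
    rw [Ei, Sym2.eq_iff] at hEe
    rcases hEe with ⟨hc1, hc2⟩ | ⟨hc1, hc2⟩ <;>
      rw [← hc1, ← hc2] at * <;> rw [h1, h2] <;> omega

lemma step_reach (lam i : ℕ) (hlam : 3 ≤ lam) (hi : i ≤ lam - 1)
    (u v w : Fin (lam + 1)) (hu1 : 1 ≤ (u : ℕ)) (hu2 : (u : ℕ) ≤ lam - 1)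
    (hv : v ≠ u) (hw : w ≠ u) :
    (delVert (withLinks (pathG (lam + 1)) (Fstep lam i)) u).Reachable v w ↔
      ((u : ℕ) ≤ lam - 1 - i → ((v : ℕ) < (u : ℕ) ↔ (w : ℕ) < (u : ℕ))) := by
  have hpath := path_hpath lam (Fstep lam i)
  have hv' : (v : ℕ) ≠ (u : ℕ) := fun h => hv (Fin.ext h)
  have hw' : (w : ℕ) ≠ (u : ℕ) := fun h => hw (Fin.ext h)
  constructor
  · intro hr hcase
    exact reach_stay _ {x : Fin (lam + 1) | (x : ℕ) < (u : ℕ)}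
      (step_sep lam i hi u hcase) hr
  · intro hcase
    by_cases hsmall : (u : ℕ) ≤ lam - 1 - i
    · have hiff := hcase hsmall
      apply reach_seg' _ u hpath v w
      intro x h1 h2 heq
      rw [heq] at h1 h2
      omega
    · push_neg at hsmall
      set j := lam - 1 - (u : ℕ) with hjdef
      have hj : j < i := by omega
      have c1 : (((lam - 2 - j : ℕ) : Fin (lam + 1)) : ℕ) = (u : ℕ) - 1 := by
        rw [Fin.val_cast_of_lt (by omega)]; omega
      have c2 : (((lam - j : ℕ) : Fin (lam + 1)) : ℕ) = (u : ℕ) + 1 := by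
        rw [Fin.val_cast_of_lt (by omega)]; omega
      have hadj : (delVert (withLinks (pathG (lam + 1)) (Fstep lam i)) u).Adj
          ((lam - 2 - j : ℕ) : Fin (lam + 1)) ((lam - j : ℕ) : Fin (lam + 1)) := by
        refine ⟨?_, ?_, ?_⟩
        · rw [withLinks_adj]
          refine Or.inr ⟨⟨j, hj, rfl⟩, ?_⟩
          intro h
          have := congrArg Fin.val h
          rw [c1, c2] at this; omega
        · intro h
          have := congrArg Fin.val h
          rw [c1] at this; omega
        · intro h
          have := congrArg Fin.val h
          rw [c2] at this; omega
      have key : ∀ z : Fin (lam + 1), z ≠ u →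
          (delVert (withLinks (pathG (lam + 1)) (Fstep lam i)) u).Reachable z
            ((lam - j : ℕ) : Fin (lam + 1)) := by
        intro z hz
        have hz' : (z : ℕ) ≠ (u : ℕ) := fun h => hz (Fin.ext h)
        by_cases hzlt : (z : ℕ) < (u : ℕ)
        · refine (reach_seg' _ u hpath z ((lam - 2 - j : ℕ) : Fin (lam + 1)) ?_).trans
            hadj.reachable
          intro x h1 h2 heq
          rw [heq] at h1 h2
          rw [c1] at h1 h2
          omega
        · apply reach_seg' _ u hpath z ((lam - j : ℕ) : Fin (lam + 1))
          intro x h1 h2 heq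
          rw [heq] at h1 h2
          rw [c2] at h1 h2
          omega
      exact (key v hv).trans (key w hw).symm

lemma nonLeaf_iff (lam : ℕ) (hlam : 3 ≤ lam) (u : Fin (lam + 1)) :
    NonLeaf (pathG (lam + 1)) u ↔ 1 ≤ (u : ℕ) ∧ (u : ℕ) ≤ lam - 1 := by
  have hu := u.isLt
  by_cases h1 : 1 ≤ (u : ℕ) ∧ (u : ℕ) ≤ lam - 1
  · have hset : (pathG (lam + 1)).neighborSet u =
        {(⟨(u : ℕ) - 1, by omega⟩ : Fin (lam + 1)), (⟨(u : ℕ) + 1, by omega⟩ : Fin (lam + 1))} := by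
      ext x
      simp only [SimpleGraph.mem_neighborSet, pathG_adj, Set.mem_insert_iff,
        Set.mem_singleton_iff, Fin.ext_iff, ne_eq]
      omega
    rw [NonLeaf, hset, Set.ncard_pair (by simp only [ne_eq, Fin.mk.injEq]; omega)]
    simpa using h1
  · rw [NonLeaf]
    have h2 : (u : ℕ) = 0 ∨ (u : ℕ) = lam := by omega
    rcases h2 with h2 | h2
    · have hset : (pathG (lam + 1)).neighborSet u = {(⟨1, by omega⟩ : Fin (lam + 1))} := by
        ext x
        simp only [SimpleGraph.mem_neighborSet, pathG_adj, Set.mem_singleton_iff,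
          Fin.ext_iff, ne_eq]
        omega
      rw [hset, Set.ncard_singleton]
      simp only [lt_self_iff_false, false_iff]
      omega
    · have hset : (pathG (lam + 1)).neighborSet u = {(⟨lam - 1, by omega⟩ : Fin (lam + 1))} := by
        ext x
        simp only [SimpleGraph.mem_neighborSet, pathG_adj, Set.mem_singleton_iff,
          Fin.ext_iff, ne_eq]
        omega
      rw [hset, Set.ncard_singleton]
      simp only [lt_self_iff_false, false_iff]
      omega

lemma crossSet_link (lam i k : ℕ) (hlam : 3 ≤ lam) (hi : i ≤ lam - 1) (hk : k + 2 ≤ lam) :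
    {u : Fin (lam + 1) | NonLeaf (pathG (lam + 1)) u ∧
        Crosses (compPartition (withLinks (pathG (lam + 1)) (Fstep lam i)) u)
          s(((k : ℕ) : Fin (lam + 1)), ((k + 2 : ℕ) : Fin (lam + 1)))} =
      if k + 1 ≤ lam - 1 - i then {((k + 1 : ℕ) : Fin (lam + 1))} else ∅ := by
  have hva : (((k : ℕ) : Fin (lam + 1)) : ℕ) = k := Fin.val_cast_of_lt (by omega)
  have hvb : (((k + 2 : ℕ) : Fin (lam + 1)) : ℕ) = k + 2 := Fin.val_cast_of_lt (by omega)
  have hvc : (((k + 1 : ℕ) : Fin (lam + 1)) : ℕ) = k + 1 := Fin.val_cast_of_lt (by omega)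
  ext u
  rw [Set.mem_setOf_eq, nonLeaf_iff lam hlam, crosses_compPartition_iff]
  constructor
  · rintro ⟨⟨hu1, hu2⟩, hA, hB, hR⟩
    rw [step_reach lam i hlam hi u _ _ hu1 hu2 hA hB, hva, hvb] at hR
    have hA' : k ≠ (u : ℕ) := fun h => hA (Fin.ext (by rw [hva]; exact h))
    have hB' : k + 2 ≠ (u : ℕ) := fun h => hB (Fin.ext (by rw [hvb]; exact h))
    rw [if_pos (by omega)]
    exact Set.mem_singleton_iff.mpr (Fin.ext (by rw [hvc]; omega)).symm
  · intro hmem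
    by_cases hcond : k + 1 ≤ lam - 1 - i
    · rw [if_pos hcond, Set.mem_singleton_iff] at hmem
      have huk : (u : ℕ) = k + 1 := by rw [hmem, hvc]
      have hA : ((k : ℕ) : Fin (lam + 1)) ≠ u := fun h => by
        have := congrArg Fin.val h; rw [hva] at this; omega
      have hB : ((k + 2 : ℕ) : Fin (lam + 1)) ≠ u := fun h => by
        have := congrArg Fin.val h; rw [hvb] at this; omega
      refine ⟨⟨by omega, by omega⟩, hA, hB, ?_⟩
      rw [step_reach lam i hlam hi u _ _ (by omega) (by omega) hA hB, hva, hvb]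
      omega
    · rw [if_neg hcond] at hmem
      exact absurd hmem (Set.notMem_empty u)

lemma crossSet_long (lam i : ℕ) (hlam : 3 ≤ lam) (hi : i ≤ lam - 1) :
    {u : Fin (lam + 1) | NonLeaf (pathG (lam + 1)) u ∧
        Crosses (compPartition (withLinks (pathG (lam + 1)) (Fstep lam i)) u)
          s((0 : Fin (lam + 1)), ((lam : ℕ) : Fin (lam + 1)))} =
      {u : Fin (lam + 1) | 1 ≤ (u : ℕ) ∧ (u : ℕ) ≤ lam - 1 - i} := by
  have hva : ((0 : Fin (lam + 1)) : ℕ) = 0 := rfl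
  have hvb : (((lam : ℕ) : Fin (lam + 1)) : ℕ) = lam := Fin.val_cast_of_lt (by omega)
  ext u
  rw [Set.mem_setOf_eq, nonLeaf_iff lam hlam, crosses_compPartition_iff, Set.mem_setOf_eq]
  constructor
  · rintro ⟨⟨hu1, hu2⟩, hA, hB, hR⟩
    rw [step_reach lam i hlam hi u _ _ hu1 hu2 hA hB, hva, hvb] at hR
    have hu := u.isLt
    exact ⟨hu1, by omega⟩
  · rintro ⟨hu1, hu2⟩
    have hA : (0 : Fin (lam + 1)) ≠ u := fun h => by
      have := congrArg Fin.val h; rw [hva] at this; omega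
    have hB : ((lam : ℕ) : Fin (lam + 1)) ≠ u := fun h => by
      have := congrArg Fin.val h; rw [hvb] at this; omega
    have hu := u.isLt
    refine ⟨⟨hu1, by omega⟩, hA, hB, ?_⟩
    rw [step_reach lam i hlam hi u _ _ hu1 (by omega) hA hB, hva, hvb]
    omega

lemma ncard_interval (lam c : ℕ) (hc : c ≤ lam) :
    ({u : Fin (lam + 1) | 1 ≤ (u : ℕ) ∧ (u : ℕ) ≤ c}).ncard = c := by
  have hset : {u : Fin (lam + 1) | 1 ≤ (u : ℕ) ∧ (u : ℕ) ≤ c} =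
      ↑(Finset.univ.filter (fun u : Fin (lam + 1) => 1 ≤ (u : ℕ) ∧ (u : ℕ) ≤ c)) := by
    ext x; simp
  rw [hset, Set.ncard_coe_finset]
  have hcb : (Finset.univ.filter (fun u : Fin (lam + 1) => 1 ≤ (u : ℕ) ∧ (u : ℕ) ≤ c)).card
      = (Finset.Icc 1 c).card := by
    apply Finset.card_bij (fun (u : Fin (lam + 1)) _ => (u : ℕ))
    · intro a ha
      simp only [Finset.mem_filter] at ha
      simp only [Finset.mem_Icc]
      omega
    · intro a _ b _ h
      exact Fin.ext h
    · intro b hb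
      simp only [Finset.mem_Icc] at hb
      refine ⟨⟨b, by omega⟩, ?_, rfl⟩
      simp only [Finset.mem_filter, Finset.mem_univ, true_and]
      constructor <;> omega
  rw [hcb, Nat.card_Icc]
  omega

lemma reach_seg0 {n : ℕ} (H : SimpleGraph (Fin n))
    (hpath : ∀ a b : Fin n, (a : ℕ) + 1 = (b : ℕ) → H.Adj a b) :
    ∀ (k : ℕ) (v w : Fin n), (w : ℕ) - (v : ℕ) = k → (v : ℕ) ≤ (w : ℕ) →
      H.Reachable v w := by
  intro k
  induction k with
  | zero =>
    intro v w h1 h2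
    have : v = w := Fin.ext (by omega)
    subst this; rfl
  | succ k ih =>
    intro v w h1 h2
    have hvw : (v : ℕ) < (w : ℕ) := by omega
    have hlt : (v : ℕ) + 1 < n := lt_of_le_of_lt hvw w.isLt
    set v' : Fin n := ⟨(v : ℕ) + 1, hlt⟩ with hv'
    have hv'val : (v' : ℕ) = (v : ℕ) + 1 := rfl
    exact ((hpath v v' rfl).reachable).trans (ih v' w (by omega) (by omega))

lemma twoNC_long (lam : ℕ) (hlam : 3 ≤ lam) :
    TwoNodeConnected
      (withLinks (pathG (lam + 1)) {s((0 : Fin (lam + 1)), ((lam : ℕ) : Fin (lam + 1)))}) := by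
  set H := withLinks (pathG (lam + 1))
    {s((0 : Fin (lam + 1)), ((lam : ℕ) : Fin (lam + 1)))} with hH
  have hpath : ∀ a b : Fin (lam + 1), (a : ℕ) + 1 = (b : ℕ) → H.Adj a b :=
    path_hpath lam _
  have h0 : ((0 : Fin (lam + 1)) : ℕ) = 0 := rfl
  have hl : (((lam : ℕ) : Fin (lam + 1)) : ℕ) = lam := Fin.val_cast_of_lt (by omega)
  refine ⟨by simp only [Fintype.card_fin]; omega, ?_, ?_⟩
  · rw [SimpleGraph.connected_iff]
    refine ⟨fun v w => ?_, ⟨0⟩⟩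
    rcases le_total (v : ℕ) (w : ℕ) with h | h
    · exact reach_seg0 _ hpath _ v w rfl h
    · exact (reach_seg0 _ hpath _ w v rfl h).symm
  · intro u v w hv hw
    have hu := u.isLt
    have hv' : (v : ℕ) ≠ (u : ℕ) := fun h => hv (Fin.ext h)
    have hw' : (w : ℕ) ≠ (u : ℕ) := fun h => hw (Fin.ext h)
    by_cases hu0 : (u : ℕ) = 0
    · apply reach_seg' H u hpath v w
      intro x h1 h2 heq
      rw [heq] at h1 h2
      omega
    · by_cases hul : (u : ℕ) = lam
      · apply reach_seg' H u hpath v w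
        have hvlt := v.isLt
        have hwlt := w.isLt
        intro x h1 h2 heq
        rw [heq] at h1 h2
        omega
      · have hadj : (delVert H u).Adj (0 : Fin (lam + 1)) ((lam : ℕ) : Fin (lam + 1)) := by
          refine ⟨?_, ?_, ?_⟩
          · rw [withLinks_adj]
            refine Or.inr ⟨rfl, ?_⟩
            intro h
            have := congrArg Fin.val h
            rw [h0, hl] at this; omega
          · intro h
            have := congrArg Fin.val h
            rw [h0] at this; omega
          · intro h
            have := congrArg Fin.val h
            rw [hl] at this; omega
        have key : ∀ z : Fin (lam + 1), z ≠ u →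
            (delVert H u).Reachable z ((lam : ℕ) : Fin (lam + 1)) := by
          intro z hz
          have hz' : (z : ℕ) ≠ (u : ℕ) := fun h => hz (Fin.ext h)
          by_cases hzlt : (z : ℕ) < (u : ℕ)
          · refine ((reach_seg' H u hpath z (0 : Fin (lam + 1)) ?_).trans hadj.reachable)
            intro x h1 h2 heq
            rw [heq] at h1 h2
            omega
          · apply reach_seg' H u hpath z ((lam : ℕ) : Fin (lam + 1))
            intro x h1 h2 heq
            rw [heq] at h1 h2
            omega
        exact (key v hv).trans (key w hw).symm

lemma links_eq (lam : ℕ) (hlam : 3 ≤ lam) (Lk : Set (Sym2 (Fin (lam + 1))))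
    (hLk : Lk = {e | (∃ k : ℕ, k + 2 ≤ lam ∧
          e = s(((k : ℕ) : Fin (lam + 1)), ((k + 2 : ℕ) : Fin (lam + 1)))) ∨
        e = s((0 : Fin (lam + 1)), ((lam : ℕ) : Fin (lam + 1)))}) :
    links (withLinks (pathG (lam + 1)) Lk) (pathG (lam + 1)) = Lk := by
  have hnot : ∀ e ∈ Lk, ¬ e.IsDiag ∧ e ∉ (pathG (lam + 1)).edgeSet := by
    intro e he
    rw [hLk] at he
    rcases he with ⟨k, hk, rfl⟩ | rfl
    · have hva : (((k : ℕ) : Fin (lam + 1)) : ℕ) = k := Fin.val_cast_of_lt (by omega)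
      have hvb : (((k + 2 : ℕ) : Fin (lam + 1)) : ℕ) = k + 2 := Fin.val_cast_of_lt (by omega)
      constructor
      · rw [Sym2.mk_isDiag_iff]
        intro h
        have := congrArg Fin.val h
        rw [hva, hvb] at this; omega
      · rw [SimpleGraph.mem_edgeSet, pathG_adj, hva, hvb]
        rintro ⟨-, h | h⟩ <;> omega
    · have hva : ((0 : Fin (lam + 1)) : ℕ) = 0 := rfl
      have hvb : (((lam : ℕ) : Fin (lam + 1)) : ℕ) = lam := Fin.val_cast_of_lt (by omega)
      constructor
      · rw [Sym2.mk_isDiag_iff]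
        intro h
        have := congrArg Fin.val h
        rw [hva, hvb] at this; omega
      · rw [SimpleGraph.mem_edgeSet, pathG_adj, hva, hvb]
        rintro ⟨-, h | h⟩ <;> omega
  ext e
  simp only [links, Set.mem_diff]
  constructor
  · rintro ⟨heG, heT⟩
    rw [withLinks, SimpleGraph.edgeSet_sup, SimpleGraph.edgeSet_fromEdgeSet] at heG
    rcases heG with h | h
    · exact absurd h heT
    · exact h.1
  · intro he
    obtain ⟨hd, hT⟩ := hnot e he
    refine ⟨?_, hT⟩
    rw [withLinks, SimpleGraph.edgeSet_sup, SimpleGraph.edgeSet_fromEdgeSet]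
    exact Or.inr ⟨he, hd⟩

/-- The tight example for the greedy algorithm: on the path
`1, …, λ+1` (here `0, …, λ`, 0-indexed) with links `ℓ_k = {k, k+2}` of cost `1/k`
(0-indexed: `{j, j+2}` of cost `1/(j+1)`) and the long link `ℓ̃ = {1, λ+1}`
(0-indexed: `{0, λ}`) of cost `1+ε`: (a) `T ∪ {ℓ̃}` is 2-node-connected, so the optimum
is at most `1+ε`; and (b) every greedy run picks exactly the links
`ℓ_{λ−1}, ℓ_{λ−2}, …, ℓ_1` in this order, of total cost `H(λ−1)`. -/
theorem greedy_tight_example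
    (lam : ℕ) (hlam3 : 3 ≤ lam) (ε : ℝ) (hε : 0 < ε)
    (T : SimpleGraph (Fin (lam + 1))) (hT : T = pathG (lam + 1))
    (Lk : Set (Sym2 (Fin (lam + 1))))
    (hLk : Lk = {e | (∃ k : ℕ, k + 2 ≤ lam ∧
          e = s(((k : ℕ) : Fin (lam + 1)), ((k + 2 : ℕ) : Fin (lam + 1)))) ∨
        e = s((0 : Fin (lam + 1)), ((lam : ℕ) : Fin (lam + 1)))})
    (G : SimpleGraph (Fin (lam + 1))) (hG : G = withLinks T Lk)
    (cost : Sym2 (Fin (lam + 1)) → ℝ)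
    (hc1 : ∀ k : ℕ, k + 2 ≤ lam →
      cost s(((k : ℕ) : Fin (lam + 1)), ((k + 2 : ℕ) : Fin (lam + 1))) = 1 / (k + 1))
    (hc2 : cost s((0 : Fin (lam + 1)), ((lam : ℕ) : Fin (lam + 1))) = 1 + ε) :
    TwoNodeConnected
      (withLinks T {s((0 : Fin (lam + 1)), ((lam : ℕ) : Fin (lam + 1)))}) ∧
    (∃ F : Finset (Sym2 (Fin (lam + 1))), ↑F ⊆ Lk ∧
      TwoNodeConnected (withLinks T (↑F : Set (Sym2 (Fin (lam + 1))))) ∧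
      ∑ e ∈ F, cost e ≤ 1 + ε) ∧
    ∀ (m : ℕ) (ℓseq : Fin m → Sym2 (Fin (lam + 1))),
      IsGreedyRun G T cost m ℓseq →
        m = lam - 1 ∧
        (∀ i : Fin m, ℓseq i =
          s(((lam - 2 - (i : ℕ) : ℕ) : Fin (lam + 1)),
            ((lam - (i : ℕ) : ℕ) : Fin (lam + 1)))) ∧
        ∑ i : Fin m, cost (ℓseq i) = harm (lam - 1) := by
  subst hT
  subst hG
  have hlinks := links_eq lam hlam3 Lk hLk
  refine ⟨twoNC_long lam hlam3, ?_, ?_⟩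
  · refine ⟨{s((0 : Fin (lam + 1)), ((lam : ℕ) : Fin (lam + 1)))}, ?_, ?_, ?_⟩
    · intro x hx
      rw [Finset.coe_singleton, Set.mem_singleton_iff] at hx
      subst hx
      rw [hLk]
      exact Or.inr rfl
    · rw [Finset.coe_singleton]
      exact twoNC_long lam hlam3
    · rw [Finset.sum_singleton, hc2]
  · intro m ℓseq hrun
    obtain ⟨hinj, hmem, hcond, hfinal⟩ := hrun
    simp only [hlinks] at hmem hcond
    have hFeq : ∀ i : ℕ, i ≤ m → (∀ j : Fin m, (j : ℕ) < i → ℓseq j = Ei lam (j : ℕ)) →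
        {e | ∃ j : Fin m, (j : ℕ) < i ∧ ℓseq j = e} = Fstep lam i := by
      intro i hi hprev
      ext e
      simp only [Set.mem_setOf_eq, Fstep]
      constructor
      · rintro ⟨j, hj, rfl⟩
        exact ⟨(j : ℕ), hj, (hprev j hj).symm⟩
      · rintro ⟨j, hj, rfl⟩
        exact ⟨⟨j, lt_of_lt_of_le hj hi⟩, hj, hprev ⟨j, lt_of_lt_of_le hj hi⟩ hj⟩
    have hinc : ∀ i : ℕ, i ≤ m → (∀ j : Fin m, (j : ℕ) < i → ℓseq j = Ei lam (j : ℕ)) →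
        ∀ e, incSet (pathG (lam + 1)) ℓseq i e =
          {u | NonLeaf (pathG (lam + 1)) u ∧
            Crosses (compPartition (withLinks (pathG (lam + 1)) (Fstep lam i)) u) e} := by
      intro i hi hprev e
      unfold incSet curPtn
      rw [hFeq i hi hprev]
    have key : ∀ i : Fin m, (i : ℕ) ≤ lam - 2 →
        (∀ j : Fin m, (j : ℕ) < (i : ℕ) → ℓseq j = Ei lam (j : ℕ)) →
        ℓseq i = Ei lam (i : ℕ) := by
      intro i hile hprev
      have him : (i : ℕ) ≤ m := le_of_lt i.isLt
      have hinc' := hinc (i : ℕ) him hprev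
      obtain ⟨hne, hmin⟩ := hcond i
      have hEiLk : Ei lam (i : ℕ) ∈ Lk := by
        rw [hLk]
        refine Or.inl ⟨lam - 2 - (i : ℕ), by omega, ?_⟩
        simp only [Ei]
        rw [show lam - 2 - (i : ℕ) + 2 = lam - (i : ℕ) from by omega]
      have hincEi : incSet (pathG (lam + 1)) ℓseq (i : ℕ) (Ei lam (i : ℕ)) =
          {((lam - 1 - (i : ℕ) : ℕ) : Fin (lam + 1))} := by
        have hcl := crossSet_link lam (i : ℕ) (lam - 2 - (i : ℕ)) hlam3 (by omega) (by omega)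
        rw [show lam - 2 - (i : ℕ) + 2 = lam - (i : ℕ) from by omega,
          show lam - 2 - (i : ℕ) + 1 = lam - 1 - (i : ℕ) from by omega, if_pos le_rfl] at hcl
        rw [hinc', show Ei lam (i : ℕ) =
          s(((lam - 2 - (i : ℕ) : ℕ) : Fin (lam + 1)), ((lam - (i : ℕ) : ℕ) : Fin (lam + 1)))
          from rfl]
        exact hcl
      have hratio := hmin (Ei lam (i : ℕ)) hEiLk
        (by rw [hincEi]; exact Set.singleton_nonempty _)
      rw [hincEi, Set.ncard_singleton, Nat.cast_one, div_one] at hratio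
      have hcostEi : cost (Ei lam (i : ℕ)) = 1 / ((lam - 1 - (i : ℕ) : ℕ) : ℝ) := by
        have h := hc1 (lam - 2 - (i : ℕ)) (by omega)
        rw [show lam - 2 - (i : ℕ) + 2 = lam - (i : ℕ) from by omega] at h
        rw [show Ei lam (i : ℕ) =
          s(((lam - 2 - (i : ℕ) : ℕ) : Fin (lam + 1)), ((lam - (i : ℕ) : ℕ) : Fin (lam + 1)))
          from rfl, h]
        rw [show lam - 1 - (i : ℕ) = lam - 2 - (i : ℕ) + 1 from by omega]
        push_cast
        ring_nf
      have hmemi := hmem i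
      rw [hLk] at hmemi
      have hpos : (0 : ℝ) < ((lam - 1 - (i : ℕ) : ℕ) : ℝ) := by
        have : 1 ≤ lam - 1 - (i : ℕ) := by omega
        exact_mod_cast Nat.lt_of_lt_of_le Nat.zero_lt_one this
      rcases hmemi with ⟨k, hk, hei⟩ | hei
      · have hkle : k + 1 ≤ lam - 1 - (i : ℕ) := by
          by_contra hcon
          rw [hei, hinc', crossSet_link lam (i : ℕ) k hlam3 (by omega) hk, if_neg hcon] at hne
          exact Set.not_nonempty_empty hne
        have hinci : incSet (pathG (lam + 1)) ℓseq (i : ℕ) (ℓseq i) =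
            {((k + 1 : ℕ) : Fin (lam + 1))} := by
          rw [hei, hinc', crossSet_link lam (i : ℕ) k hlam3 (by omega) hk, if_pos hkle]
        rw [hinci, Set.ncard_singleton, Nat.cast_one, div_one, hei, hc1 k hk, hcostEi]
          at hratio
        have hpos2 : (0 : ℝ) < (k : ℝ) + 1 := by positivity
        rw [div_le_div_iff₀ hpos2 hpos] at hratio
        have hcast : ((lam - 1 - (i : ℕ) : ℕ) : ℝ) ≤ (k : ℝ) + 1 := by linarith
        have hcast2 : ((lam - 1 - (i : ℕ) : ℕ) : ℝ) ≤ ((k + 1 : ℕ) : ℝ) := by push_cast; linarith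
        have hnat : lam - 1 - (i : ℕ) ≤ k + 1 := by exact_mod_cast hcast2
        have hkeq : k = lam - 2 - (i : ℕ) := by omega
        rw [hei, hkeq, show Ei lam (i : ℕ) =
          s(((lam - 2 - (i : ℕ) : ℕ) : Fin (lam + 1)), ((lam - (i : ℕ) : ℕ) : Fin (lam + 1)))
          from rfl, show lam - 2 - (i : ℕ) + 2 = lam - (i : ℕ) from by omega]
      · exfalso
        have hinci : incSet (pathG (lam + 1)) ℓseq (i : ℕ) (ℓseq i) =
            {u : Fin (lam + 1) | 1 ≤ (u : ℕ) ∧ (u : ℕ) ≤ lam - 1 - (i : ℕ)} := by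
          rw [hei, hinc', crossSet_long lam (i : ℕ) hlam3 (by omega)]
        rw [hinci, ncard_interval lam _ (by omega), hei, hc2, hcostEi] at hratio
        rw [div_le_div_iff₀ hpos hpos] at hratio
        nlinarith
    have hdetN : ∀ N : ℕ, ∀ i : Fin m, (i : ℕ) = N → (i : ℕ) ≤ lam - 2 →
        ℓseq i = Ei lam (i : ℕ) := by
      intro N
      induction N using Nat.strong_induction_on with
      | _ N ih =>
        intro i hiN hile
        exact key i hile (fun j hj => ih (j : ℕ) (by omega) j rfl (by omega))
    have hdet : ∀ i : Fin m, (i : ℕ) ≤ lam - 2 → ℓseq i = Ei lam (i : ℕ) :=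
      fun i h => hdetN (i : ℕ) i rfl h
    have hm1 : m ≤ lam - 1 := by
      by_contra hcon
      push_neg at hcon
      set i : Fin m := ⟨lam - 1, hcon⟩ with hidef
      have hival : (i : ℕ) = lam - 1 := rfl
      obtain ⟨hne, -⟩ := hcond i
      have hprev : ∀ j : Fin m, (j : ℕ) < (i : ℕ) → ℓseq j = Ei lam (j : ℕ) :=
        fun j hj => hdet j (by omega)
      have hinc' := hinc (i : ℕ) (le_of_lt i.isLt) hprev
      obtain ⟨u, hu⟩ := hne
      rw [hinc'] at hu
      obtain ⟨hNL, v, w, hs, hbl⟩ := hu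
      rw [nonLeaf_iff lam hlam3] at hNL
      obtain ⟨hvne, hwne, hnr⟩ :=
        (crosses_compPartition_iff _ u v w).mp ⟨v, w, rfl, hbl⟩
      apply hnr
      rw [step_reach lam (i : ℕ) hlam3 (by omega) u v w hNL.1 hNL.2 hvne hwne]
      intro hule
      exfalso
      omega
    have hm2 : lam - 1 ≤ m := by
      by_contra hcon
      push_neg at hcon
      have hprev : ∀ j : Fin m, (j : ℕ) < m → ℓseq j = Ei lam (j : ℕ) := by
        intro j hj
        have := j.isLt
        exact hdet j (by omega)
      have hv1 : (((1 : ℕ) : Fin (lam + 1)) : ℕ) = 1 := Fin.val_cast_of_lt (by omega)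
      have hv0 : ((0 : Fin (lam + 1)) : ℕ) = 0 := rfl
      have hv2 : (((2 : ℕ) : Fin (lam + 1)) : ℕ) = 2 := Fin.val_cast_of_lt (by omega)
      have hNL1 : NonLeaf (pathG (lam + 1)) ((1 : ℕ) : Fin (lam + 1)) := by
        rw [nonLeaf_iff lam hlam3, hv1]
        omega
      have hfin := hfinal _ hNL1
      unfold curPtn at hfin
      rw [hFeq m le_rfl hprev] at hfin
      have hne01 : (0 : Fin (lam + 1)) ≠ ((1 : ℕ) : Fin (lam + 1)) := by
        intro h
        have := congrArg Fin.val h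
        rw [hv0, hv1] at this; omega
      have hne21 : ((2 : ℕ) : Fin (lam + 1)) ≠ ((1 : ℕ) : Fin (lam + 1)) := by
        intro h
        have := congrArg Fin.val h
        rw [hv2, hv1] at this; omega
      have h0mem : {w | (delVert (withLinks (pathG (lam + 1)) (Fstep lam m))
            ((1 : ℕ) : Fin (lam + 1))).Reachable (0 : Fin (lam + 1)) w} ∈
          compPartition (withLinks (pathG (lam + 1)) (Fstep lam m))
            ((1 : ℕ) : Fin (lam + 1)) := ⟨(0 : Fin (lam + 1)), hne01, rfl⟩
      rw [hfin, Set.mem_singleton_iff] at h0mem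
      have hreach : (delVert (withLinks (pathG (lam + 1)) (Fstep lam m))
          ((1 : ℕ) : Fin (lam + 1))).Reachable (0 : Fin (lam + 1)) ((2 : ℕ) : Fin (lam + 1)) := by
        have : ((2 : ℕ) : Fin (lam + 1)) ∈ {v : Fin (lam + 1) | v ≠ ((1 : ℕ) : Fin (lam + 1))} :=
          hne21
        rw [← h0mem] at this
        exact this
      rw [step_reach lam m hlam3 (by omega) _ _ _ (by omega) (by omega) hne01 hne21] at hreach
      have := hreach (by omega)
      omega
    have hmeq : m = lam - 1 := le_antisymm hm1 hm2
    refine ⟨hmeq, ?_, ?_⟩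
    · intro i
      have := i.isLt
      exact hdet i (by omega)
    · have hform : ∀ i : Fin m, cost (ℓseq i) = 1 / ((lam - 1 - (i : ℕ) : ℕ) : ℝ) := by
        intro i
        have hilt := i.isLt
        rw [hdet i (by omega), show Ei lam (i : ℕ) =
          s(((lam - 2 - (i : ℕ) : ℕ) : Fin (lam + 1)), ((lam - (i : ℕ) : ℕ) : Fin (lam + 1)))
          from rfl, show lam - (i : ℕ) = lam - 2 - (i : ℕ) + 2 from by omega,
          hc1 (lam - 2 - (i : ℕ)) (by omega),
          show lam - 1 - (i : ℕ) = lam - 2 - (i : ℕ) + 1 from by omega]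
        push_cast
        ring_nf
      have hsum : ∑ i : Fin m, cost (ℓseq i) =
          ∑ i : Fin m, (1 : ℝ) / ((lam - 1 - (i : ℕ) : ℕ) : ℝ) :=
        Finset.sum_congr rfl (fun i _ => hform i)
      have hharm : harm (lam - 1) =
          ∑ j ∈ Finset.range (lam - 1), (1 : ℝ) / ((lam - 1 - j : ℕ) : ℝ) := by
        rw [harm, ← Finset.sum_range_reflect]
        apply Finset.sum_congr rfl
        intro j hj
        rw [Finset.mem_range] at hj
        rw [show lam - 1 - j = lam - 1 - 1 - j + 1 from by omega]
        push_cast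
        ring_nf
      rw [hsum, show (∑ i : Fin m, (1 : ℝ) / ((lam - 1 - (i : ℕ) : ℕ) : ℝ)) =
        ∑ j ∈ Finset.range m, (1 : ℝ) / ((lam - 1 - j : ℕ) : ℝ) from
        Fin.sum_univ_eq_sum_range (fun j => (1 : ℝ) / ((lam - 1 - j : ℕ) : ℝ)) m,
        hmeq, hharm]

end TwoNCTAP
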